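/- A finite simple aperiodic semigroup S satisfies Cayley(S) ≅ S. -/

import Mathlib

/-- φ_s([a_1,...,a_n]) = [s a_1, s a_1 a_2, ..., s a_1 ⋯ a_n] -/
def phi {S : Type*} [Mul S] (s : S) (l : List S) : List S :=
  (l.scanl (· * ·) s).tail

/-- Cayley(S): the subsemigroup of functions on words over S¹ = WithOne S
(under composition) generated by the maps φ_s, s ∈ S. -/
def Cayley (S : Type*) [Semigroup S] : Subsemigroup (Function.End (List (WithOne S))) :=
  Subsemigroup.closure {f | ∃ s : S, f = phi (s : WithOne S)}

/-- `spow s n` is the (n+1)-st power of s in a semigroup. -/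
def spow {S : Type*} [Semigroup S] (s : S) : ℕ → S
  | 0 => s
  | n + 1 => spow s n * s

section Aux

variable {S : Type*} [Semigroup S]

lemma spow_succ (s : S) (n : ℕ) : spow s (n + 1) = spow s n * s := rfl

lemma spow_succ' (s : S) (n : ℕ) : spow s (n + 1) = s * spow s n := by
  induction n with
  | zero => rfl
  | succ n ih => rw [spow_succ, ih, mul_assoc, ← spow_succ, ih]

lemma spow_stable {s : S} {n : ℕ} (h : spow s n = spow s (n + 1)) :
    spow s (n + 1) = spow s (n + 2) := by
  rw [spow_succ s (n+1), ← h]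
  exact h

/-- Membership in the two-sided ideal generated by `z` is everything, by simplicity. -/
lemma mem_ideal (hsimple : ∀ I : Set S, I.Nonempty →
      (∀ x ∈ I, ∀ s : S, s * x ∈ I ∧ x * s ∈ I) → I = Set.univ) (z x : S) :
    x = z ∨ (∃ s, x = s * z) ∨ (∃ t, x = z * t) ∨ (∃ s t, x = s * z * t) := by
  set I : Set S := {y | y = z ∨ (∃ s, y = s * z) ∨ (∃ t, y = z * t) ∨ (∃ s t, y = s * z * t)}
    with hI
  have hcl : ∀ y ∈ I, ∀ s : S, s * y ∈ I ∧ y * s ∈ I := by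
    rintro y (rfl | ⟨a, rfl⟩ | ⟨b, rfl⟩ | ⟨a, b, rfl⟩) s
    · exact ⟨Or.inr (Or.inl ⟨s, rfl⟩), Or.inr (Or.inr (Or.inl ⟨s, rfl⟩))⟩
    · exact ⟨Or.inr (Or.inl ⟨s * a, (mul_assoc s a z).symm⟩),
        Or.inr (Or.inr (Or.inr ⟨a, s, rfl⟩))⟩
    · exact ⟨Or.inr (Or.inr (Or.inr ⟨s, b, (mul_assoc s z b).symm⟩)),
        Or.inr (Or.inr (Or.inl ⟨b * s, mul_assoc z b s⟩))⟩
    · exact ⟨Or.inr (Or.inr (Or.inr ⟨s * a, b, by simp [mul_assoc]⟩)),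
        Or.inr (Or.inr (Or.inr ⟨a, b * s, by simp [mul_assoc]⟩))⟩
  have := hsimple I ⟨z, Or.inl rfl⟩ hcl
  have hx : x ∈ I := this ▸ Set.mem_univ x
  exact hx

lemma claimA {x s : S} (h : x = s * (x * x)) (k : ℕ) :
    x = spow s k * spow x (k + 1) := by
  induction k with
  | zero => exact h
  | succ k ih =>
    have : spow s (k+1) * spow x (k+2) = spow s k * (s * (x * (x * spow x k))) := by
      rw [spow_succ s k, spow_succ' x (k+1), spow_succ' x k, mul_assoc]
    rw [this, show s * (x * (x * spow x k)) = (s * (x * x)) * spow x k by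
        simp only [mul_assoc], ← h, ← spow_succ' x k, ← ih]

lemma claimB {x t : S} (h : x = (x * x) * t) (k : ℕ) :
    x = spow x (k + 1) * spow t k := by
  induction k with
  | zero => exact h
  | succ k ih =>
    have : spow x (k+2) * spow t (k+1) = x * ((spow x (k+1) * spow t k) * t) := by
      rw [spow_succ' x (k+1), spow_succ t k]
      simp only [mul_assoc]
    rw [this, ← ih, ← mul_assoc, ← h]

lemma band_of_right {x t : S} (haper : ∀ s : S, ∃ n : ℕ, spow s n = spow s (n + 1))
    (h : x = (x * x) * t) : x * x = x := by
  obtain ⟨n, hn⟩ := haper t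
  have hb := claimB h n
  have hb' := claimB h (n + 1)
  rw [← hn, spow_succ' x (n+1), mul_assoc, ← hb] at hb'
  exact hb'.symm

lemma band (hsimple : ∀ I : Set S, I.Nonempty →
      (∀ x ∈ I, ∀ s : S, s * x ∈ I ∧ x * s ∈ I) → I = Set.univ)
    (haper : ∀ s : S, ∃ n : ℕ, spow s n = spow s (n + 1)) (x : S) : x * x = x := by
  rcases mem_ideal hsimple (x * x) x with h | ⟨s, h⟩ | ⟨t, h⟩ | ⟨s, t, h⟩
  · exact h.symm
  · -- x = s * (x * x)
    obtain ⟨n, hn⟩ := haper x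
    have h' : x = s * (x * x) := h
    have ha := claimA h' n
    have ha2 : x = spow s n * spow x (n + 2) := by rw [← spow_stable hn]; exact ha
    rw [spow_succ x (n+1), ← mul_assoc, ← ha] at ha2
    exact ha2.symm
  · exact band_of_right haper (by rw [mul_assoc] at h ⊢; exact h)
  · -- x = s * (x * x) * t
    have h' : x = s * (x * (x * t)) := by
      conv_lhs => rw [h]
      simp only [mul_assoc]
    obtain ⟨n, hn⟩ := haper (x * t)
    have hc : ∀ k, x = spow s k * (x * spow (x * t) k) := by
      intro k
      induction k with
      | zero => exact h'
      | succ k ih =>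
        have : spow s (k+1) * (x * spow (x*t) (k+1)) =
            spow s k * (s * (x * ((x * t) * spow (x*t) k))) := by
          rw [spow_succ s k, spow_succ' (x*t) k]
          simp only [mul_assoc]
        rw [this, show s * (x * ((x * t) * spow (x*t) k)) =
            (s * (x * (x * t))) * spow (x*t) k by simp only [mul_assoc], ← h', ← ih]
    have h1 := hc n
    have h2 := hc n
    rw [hn, spow_succ (x*t) n] at h2
    have h3 : x = x * (x * t) := by
      rw [show spow (x*t) n * (x*t) = spow (x*t) n * (x*t) from rfl] at h2
      calc x = spow s n * (x * (spow (x*t) n * (x * t))) := h2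
        _ = (spow s n * (x * spow (x*t) n)) * (x * t) := by simp only [mul_assoc]
        _ = x * (x * t) := by rw [← h1]
    exact band_of_right haper (by rw [mul_assoc]; exact h3)

lemma absorb (hband : ∀ x : S, x * x = x) {a s w : S} (h : a = s * (a * w)) :
    a * w = a := by
  conv_lhs => rw [h]
  rw [mul_assoc, mul_assoc, hband w, ← h]

lemma rect_of_eq (hband : ∀ x : S, x * x = x) {a b : S} (h : a * b = a) :
    a * b * a = a := by rw [h, hband]

lemma rect_of_right (hband : ∀ x : S, x * x = x) {a b t : S} (h : a = (a * b) * t) :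
    a * b * a = a := by
  nth_rewrite 2 [h]
  rw [← mul_assoc, hband (a * b), ← h]

lemma rect (hsimple : ∀ I : Set S, I.Nonempty →
      (∀ x ∈ I, ∀ s : S, s * x ∈ I ∧ x * s ∈ I) → I = Set.univ)
    (hband : ∀ x : S, x * x = x) (a b : S) : a * b * a = a := by
  rcases mem_ideal hsimple (a * b) a with h | ⟨s, h⟩ | ⟨t, h⟩ | ⟨s, t, h⟩
  · exact rect_of_eq hband h.symm
  · exact rect_of_eq hband (absorb hband h)
  · exact rect_of_right hband h
  · have h' : a = s * (a * (b * t)) := by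
      conv_lhs => rw [h]
      simp only [mul_assoc]
    have := absorb hband h'
    exact rect_of_right hband (by rw [mul_assoc]; exact this.symm)

lemma phi_cons {M : Type*} [Mul M] (a x : M) (l : List M) :
    phi a (x :: l) = (a * x) :: phi (a * x) l := by
  show (List.scanl (· * ·) a (x :: l)).tail = _
  rw [List.scanl_cons]
  show List.scanl (· * ·) (a * x) l = _
  cases l <;> simp [phi, List.scanl_cons]

lemma phi_comp (hband : ∀ x : S, x * x = x) (hrect : ∀ a b : S, a * b * a = a)
    (l : List (WithOne S)) : ∀ u w : S,
    phi (u : WithOne S) (phi (w : WithOne S) l) = phi ((u * w : S) : WithOne S) l := by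
  have hrect' : ∀ a b : S, a * (b * a) = a := fun a b => by
    rw [← mul_assoc]; exact hrect a b
  induction l with
  | nil => intro u w; rfl
  | cons x l ih =>
    intro u w
    induction x using WithOne.recOneCoe with
    | one =>
      rw [phi_cons, mul_one, phi_cons, phi_cons, mul_one, ← WithOne.coe_mul, ih (u*w) w]
      congr 2
      rw [mul_assoc, hband w]
    | coe x' =>
      rw [phi_cons, ← WithOne.coe_mul, phi_cons, ← WithOne.coe_mul, ih (u * (w * x')) (w * x'),
        phi_cons, ← WithOne.coe_mul]
      congr 2
      · rw [mul_assoc]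
      · congr 1
        rw [mul_assoc, mul_assoc, hrect' x' w, ← mul_assoc]

end Aux

/-- A finite simple aperiodic semigroup S satisfies Cayley(S) ≅ S. -/
theorem cayley_of_simple_aperiodic {S : Type*} [Semigroup S] [Fintype S]
    (hsimple : ∀ I : Set S, I.Nonempty →
      (∀ x ∈ I, ∀ s : S, s * x ∈ I ∧ x * s ∈ I) → I = Set.univ)
    (haper : ∀ s : S, ∃ n : ℕ, spow s n = spow s (n + 1)) :
    Nonempty (Cayley S ≃* S) := by
  have hband := band hsimple haper
  have hrect := rect hsimple hband
  let F : S → Function.End (List (WithOne S)) := fun s => phi (s : WithOne S)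
  have hcomp : ∀ u w : S, F u * F w = F (u * w) := by
    intro u w
    funext l
    exact phi_comp hband hrect l u w
  have hmem : ∀ s : S, F s ∈ Cayley S :=
    fun s => Subsemigroup.subset_closure ⟨s, rfl⟩
  let g : S →ₙ* Cayley S :=
    { toFun := fun s => ⟨F s, hmem s⟩
      map_mul' := fun u w => Subtype.ext (hcomp u w).symm }
  have hinj : Function.Injective g := by
    intro u w h
    have h' : F u = F w := congrArg Subtype.val h
    have h2 : phi (u : WithOne S) [1] = phi (w : WithOne S) [1] := congrFun h' [1]
    simp only [phi_cons, mul_one] at h2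
    have h3 : (u : WithOne S) = w := by
      have := List.head_eq_of_cons_eq h2
      exact this
    exact WithOne.coe_inj.mp h3
  have hsurj : Function.Surjective g := by
    rintro ⟨f, hf⟩
    have : ∃ s : S, F s = f := by
      refine Subsemigroup.closure_induction (p := fun x _ => ∃ s : S, F s = x) ?_ ?_ hf
      · rintro x ⟨s, rfl⟩; exact ⟨s, rfl⟩
      · rintro x y _ _ ⟨u, rfl⟩ ⟨w, rfl⟩
        exact ⟨u * w, (hcomp u w).symm⟩
    obtain ⟨s, hs⟩ := this
    exact ⟨s, Subtype.ext hs⟩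
  exact ⟨(MulEquiv.ofBijective g ⟨hinj, hsurj⟩).symm⟩
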